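/- The smallest order of a triangle-free graph G with χ_1(G) = 3 is 9; that is, every triangle-free graph on at most 8 vertices has χ_1 ≤ 2, and there exists a triangle-free graph on 9 vertices with χ_1 = 3. -/

import Mathlib

open SimpleGraph

/-- A set `U` is `k`-independent in `G` if every vertex of `U` has at most `k`
neighbours inside `U` (i.e. the induced subgraph has maximum degree at most `k`). -/
def KIndep {V : Type*} (G : SimpleGraph V) (k : ℕ) (U : Set V) : Prop :=
  ∀ v ∈ U, {w | w ∈ U ∧ G.Adj v w}.ncard ≤ k

/-- `G` is `(m,k)`-colourable: the vertices can be coloured with `m` colours so that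
every colour class is `k`-independent. -/
def DefColorable {V : Type*} (G : SimpleGraph V) (m k : ℕ) : Prop :=
  ∃ c : V → Fin m, ∀ i : Fin m, KIndep G k {v | c v = i}

/-- The `k`-defective chromatic number: the least `m` such that `G` is `(m,k)`-colourable. -/
noncomputable def defChrom {V : Type*} (G : SimpleGraph V) (k : ℕ) : ℕ :=
  sInf {m | DefColorable G m k}


set_option maxRecDepth 100000
set_option linter.unusedSectionVars false
set_option linter.unusedTactic false
set_option linter.unreachableTactic false

section Aux
open Finset
variable {V : Type*} [Fintype V] [DecidableEq V] {G : SimpleGraph V} [DecidableRel G.Adj]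

lemma ncard_eq_filter_card (p : V → Prop) [DecidablePred p] :
    {w | p w}.ncard = (Finset.univ.filter p).card := by
  rw [← Set.ncard_coe_finset]
  congr 1
  ext w
  simp

lemma defcol_of_part {m k : ℕ} (c : V → Fin m)
    (h : ∀ v, (Finset.univ.filter fun w => G.Adj v w ∧ c w = c v).card ≤ k) :
    DefColorable G m k := by
  refine ⟨c, fun i v hv => ?_⟩
  have hv' : c v = i := hv
  have hset : {w | w ∈ {v | c v = i} ∧ G.Adj v w} = {w | G.Adj v w ∧ c w = c v} := by
    ext w; simp [Set.mem_setOf_eq, hv', and_comm]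
  rw [hset, ncard_eq_filter_card]
  exact h v

lemma part_of_defcol {m k : ℕ} (h : DefColorable G m k) :
    ∃ c : V → Fin m, ∀ v, (Finset.univ.filter fun w => G.Adj v w ∧ c w = c v).card ≤ k := by
  obtain ⟨c, hc⟩ := h
  refine ⟨c, fun v => ?_⟩
  have h2 := hc (c v) v rfl
  have hset : {w | w ∈ {u | c u = c v} ∧ G.Adj v w} = {w | G.Adj v w ∧ c w = c v} := by
    ext w; simp [Set.mem_setOf_eq, and_comm]
  rw [hset, ncard_eq_filter_card] at h2
  exact h2

lemma defColorable_mono {m m' k : ℕ} (h : DefColorable G m k) (hm : m ≤ m') :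
    DefColorable G m' k := by
  obtain ⟨c, hc⟩ := h
  refine ⟨fun v => Fin.castLE hm (c v), fun i v hv => ?_⟩
  by_cases hi : (i : ℕ) < m
  · have hset : {v | Fin.castLE hm (c v) = i} = {v | c v = ⟨i, hi⟩} := by
      ext v
      simp only [Set.mem_setOf_eq, Fin.ext_iff, Fin.coe_castLE]
    rw [hset] at hv ⊢
    exact hc ⟨i, hi⟩ v hv
  · exfalso
    have : ((c v : ℕ)) = (i : ℕ) := by
      simpa [Fin.ext_iff] using hv
    exact hi (this ▸ (c v).isLt)

lemma noTri' (hG : G.CliqueFree 3) : ∀ a b c : V, G.Adj a b → G.Adj a c → G.Adj b c → False :=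
  fun a b c hab hac hbc =>
    hG ({a, b, c} : Finset V) (SimpleGraph.is3Clique_triple_iff.mpr ⟨hab, hac, hbc⟩)

lemma lovasz (hdeg : ∀ v : V, (Finset.univ.filter (G.Adj v ·)).card ≤ 3) :
    ∃ c : V → Fin 2, ∀ v, (Finset.univ.filter fun w => G.Adj v w ∧ c w = c v).card ≤ 1 := by
  classical
  set S : (V → Fin 2) → V → Finset V :=
    fun c v => Finset.univ.filter fun w => G.Adj v w ∧ c w = c v with hS
  set D : (V → Fin 2) → V → Finset V :=
    fun c v => Finset.univ.filter fun w => G.Adj v w ∧ c w ≠ c v with hD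
  set B : (V → Fin 2) → ℕ := fun c => ∑ v, (S c v).card with hB
  obtain ⟨c, -, hc⟩ := Finset.exists_min_image (Finset.univ : Finset (V → Fin 2)) B
    ⟨fun _ => 0, Finset.mem_univ _⟩
  refine ⟨c, fun v => ?_⟩
  by_contra hbad
  push_neg at hbad
  have hbad : 2 ≤ (S c v).card := hbad
  -- degree split
  have hsplit : (S c v).card + (D c v).card ≤ 3 := by
    have h1 : (Finset.univ.filter (G.Adj v ·)).filter (fun w => c w = c v) = S c v := by
      rw [Finset.filter_filter]
    have h2 : (Finset.univ.filter (G.Adj v ·)).filter (fun w => ¬ c w = c v) = D c v := by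
      rw [Finset.filter_filter]
    have := Finset.card_filter_add_card_filter_not
      (s := Finset.univ.filter (G.Adj v ·)) (p := fun w => c w = c v)
    rw [h1, h2] at this
    rw [this]
    exact hdeg v
  have hDle : (D c v).card ≤ 1 := by omega
  -- the flipped coloring
  set c' : V → Fin 2 := Function.update c v (c v + 1) with hc'
  have hflip2 : ∀ a b : Fin 2, (a = b + 1) ↔ a ≠ b := by decide
  have hcv' : c' v = c v + 1 := Function.update_self v _ c
  have hcw : ∀ w, w ≠ v → c' w = c w := fun w hw => Function.update_of_ne hw _ c
  have key : ∀ u, (((S c' u).card : ℤ)) =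
      if u = v then ((D c v).card : ℤ)
      else ((S c u).card : ℤ) + (if G.Adj v u then (if c u = c v then -1 else 1) else 0) := by
    intro u
    by_cases hu : u = v
    · subst hu
      simp only [if_pos rfl]
      congr 2
      ext w
      simp only [hS, hD, Finset.mem_filter, Finset.mem_univ, true_and]
      constructor
      · rintro ⟨haw, hcol⟩
        have hwv : w ≠ u := fun h => G.loopless.irrefl u (h ▸ haw)
        rw [hcw w hwv, hcv'] at hcol
        exact ⟨haw, (hflip2 _ _).mp hcol⟩
      · rintro ⟨haw, hcol⟩
        have hwv : w ≠ u := fun h => G.loopless.irrefl u (h ▸ haw)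
        rw [hcw w hwv, hcv']
        exact ⟨haw, (hflip2 _ _).mpr hcol⟩
    · rw [if_neg hu]
      have hcu : c' u = c u := hcw u hu
      by_cases hA : G.Adj v u
      · rw [if_pos hA]
        by_cases hcol : c u = c v
        · -- S c' u = (S c u).erase v
          have hset : S c' u = (S c u).erase v := by
            ext w
            simp only [hS, Finset.mem_erase, Finset.mem_filter, Finset.mem_univ, true_and]
            by_cases hw : w = v
            · subst hw
              simp only [ne_eq, not_true_eq_false, false_and, iff_false, not_and]
              intro _
              rw [hcv', hcu]
              intro h
              exact ((hflip2 _ _).mp h.symm) hcol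
            · rw [hcw w hw, hcu]
              simp [hw]
          have hmem : v ∈ S c u := by
            simp only [hS, Finset.mem_filter, Finset.mem_univ, true_and]
            exact ⟨hA.symm, hcol.symm⟩
          have h1 : 1 ≤ (S c u).card := Finset.card_pos.mpr ⟨v, hmem⟩
          rw [hset, Finset.card_erase_of_mem hmem, if_pos hcol]
          push_cast [h1]
          ring
        · -- S c' u = insert v (S c u)
          have hvn : v ∉ S c u := by
            simp only [hS, Finset.mem_filter, Finset.mem_univ, true_and, not_and]
            intro _
            exact fun h => hcol h.symm
          have hset : S c' u = insert v (S c u) := by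
            ext w
            simp only [hS, Finset.mem_insert, Finset.mem_filter, Finset.mem_univ, true_and]
            by_cases hw : w = v
            · subst hw
              simp only [true_or, iff_true]
              refine ⟨hA.symm, ?_⟩
              rw [hcv', hcu]
              exact ((hflip2 _ _).mpr hcol).symm
            · rw [hcw w hw, hcu]
              simp [hw]
          rw [hset, Finset.card_insert_of_notMem hvn, if_neg hcol]
          push_cast
          ring
      · rw [if_neg hA]
        have hset : S c' u = S c u := by
          ext w
          simp only [hS, Finset.mem_filter, Finset.mem_univ, true_and]
          by_cases hw : w = v
          · subst hw
            constructor <;> rintro ⟨haw, -⟩ <;> exact absurd haw.symm hA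
          · rw [hcw w hw, hcu]
        rw [hset]
        push_cast
        ring
  -- sum it up
  have hBle : B c ≤ B c' := hc c' (Finset.mem_univ c')
  have hsum : (B c' : ℤ) = (B c : ℤ) - 2 * (S c v).card + 2 * (D c v).card := by
    have e1 : (B c' : ℤ) = ∑ u, ((S c' u).card : ℤ) := by
      rw [hB]; push_cast; rfl
    have e2 : (B c : ℤ) = ∑ u, ((S c u).card : ℤ) := by
      rw [hB]; push_cast; rfl
    rw [e1, e2]
    calc ∑ u, ((S c' u).card : ℤ)
        = ∑ u, (if u = v then ((D c v).card : ℤ)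
            else ((S c u).card : ℤ) + (if G.Adj v u then (if c u = c v then -1 else 1) else 0)) :=
          Finset.sum_congr rfl (fun u _ => key u)
      _ = ∑ u, ((if u = v then ((D c v).card : ℤ) - ((S c u).card : ℤ)
              - (if G.Adj v u then (if c u = c v then -1 else 1) else 0) else 0)
            + (((S c u).card : ℤ) + (if G.Adj v u then (if c u = c v then -1 else 1) else 0))) := by
          refine Finset.sum_congr rfl (fun u _ => ?_)
          by_cases hu : u = v <;> simp [hu] <;> ring
      _ = ((D c v).card : ℤ) - ((S c v).card : ℤ)
            - (if G.Adj v v then (if c v = c v then -1 else 1) else 0)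
            + (∑ u, ((S c u).card : ℤ)
              + ∑ u, (if G.Adj v u then (if c u = c v then (-1:ℤ) else 1) else 0)) := by
          rw [Finset.sum_add_distrib, Finset.sum_ite_eq' Finset.univ v, Finset.sum_add_distrib]
          simp
      _ = ((D c v).card : ℤ) - ((S c v).card : ℤ)
            + (∑ u, ((S c u).card : ℤ)
              + ∑ u, (if G.Adj v u then (if c u = c v then (-1:ℤ) else 1) else 0)) := by
          rw [if_neg (G.loopless.irrefl v)]; ring
      _ = (∑ u, ((S c u).card : ℤ)) - 2 * (S c v).card + 2 * (D c v).card := by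
          have hind : ∀ u, (if G.Adj v u then (if c u = c v then (-1:ℤ) else 1) else 0)
              = (if u ∈ D c v then (1:ℤ) else 0) - (if u ∈ S c v then (1:ℤ) else 0) := by
            intro u
            simp only [hS, hD, Finset.mem_filter, Finset.mem_univ, true_and, ne_eq]
            by_cases h1 : G.Adj v u <;> by_cases h2 : c u = c v <;> simp [h1, h2]
          rw [Finset.sum_congr rfl (fun u _ => hind u), Finset.sum_sub_distrib]
          rw [Finset.sum_ite_mem, Finset.sum_ite_mem, Finset.univ_inter, Finset.univ_inter]
          simp only [Finset.sum_const, nsmul_eq_mul, mul_one]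
          ring
  have : (B c : ℤ) ≤ (B c' : ℤ) := by exact_mod_cast hBle
  rw [hsum] at this
  have h2 : (2:ℤ) ≤ (S c v).card := by exact_mod_cast hbad
  have h1 : ((D c v).card : ℤ) ≤ 1 := by exact_mod_cast hDle
  linarith

lemma highdegAux (hcard : Fintype.card V ≤ 8) (hG : G.CliqueFree 3) (v : V)
    (hmax : ∀ u : V, (Finset.univ.filter (G.Adj u ·)).card ≤ (Finset.univ.filter (G.Adj v ·)).card)
    (h4 : 4 ≤ (Finset.univ.filter (G.Adj v ·)).card) :
    ∃ c : V → Fin 2, ∀ u, (Finset.univ.filter fun w => G.Adj u w ∧ c w = c u).card ≤ 1 := by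
  classical
  set N : Finset V := Finset.univ.filter (G.Adj v ·) with hN
  set R : Finset V := Finset.univ \ insert v N with hR
  have hNmem : ∀ x, x ∈ N ↔ G.Adj v x := by intro x; simp [hN]
  have hvN : v ∉ N := by simp [hNmem]
  have hNind : ∀ x ∈ N, ∀ y ∈ N, ¬ G.Adj x y := by
    intro x hx y hy hxy
    exact noTri' hG v x y ((hNmem x).mp hx) ((hNmem y).mp hy) hxy
  have hRmem : ∀ x, x ∈ R ↔ (x ≠ v ∧ ¬ G.Adj v x) := by
    intro x
    simp only [hR, Finset.mem_sdiff, Finset.mem_univ, true_and, Finset.mem_insert, hNmem]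
    tauto
  have hcover : ∀ w, w = v ∨ w ∈ N ∨ w ∈ R := by
    intro w
    by_cases h1 : w = v
    · exact Or.inl h1
    by_cases h2 : G.Adj v w
    · exact Or.inr (Or.inl ((hNmem w).mpr h2))
    · exact Or.inr (Or.inr ((hRmem w).mpr ⟨h1, h2⟩))
  have hcards : 1 + N.card + R.card = Fintype.card V := by
    have h1 : R.card = Finset.univ.card - (insert v N).card :=
      Finset.card_sdiff_of_subset (Finset.subset_univ _)
    have h2 : (insert v N).card = N.card + 1 := Finset.card_insert_of_notMem hvN
    have h3 : (insert v N).card ≤ Finset.univ.card :=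
      Finset.card_le_card (Finset.subset_univ _)
    rw [Finset.card_univ] at h1 h3
    omega
  by_cases hRdeg : ∀ u ∈ R, (R ∩ Finset.univ.filter (G.Adj u ·)).card ≤ 1
  · -- Case (a): classes N and {v} ∪ R
    refine ⟨fun u => if u ∈ N then 1 else 0, fun u => ?_⟩
    rcases hcover u with hu | hu | hu
    · subst hu
      have : (Finset.univ.filter fun w => G.Adj u w ∧
          (if w ∈ N then (1 : Fin 2) else 0) = (if u ∈ N then 1 else 0)) = ∅ := by
        rw [Finset.filter_eq_empty_iff]
        rintro w - ⟨haw, hcw⟩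
        rw [if_pos ((hNmem w).mpr haw), if_neg hvN] at hcw
        exact absurd hcw (by decide)
      rw [this]; simp
    · have : (Finset.univ.filter fun w => G.Adj u w ∧
          (if w ∈ N then (1 : Fin 2) else 0) = (if u ∈ N then 1 else 0)) = ∅ := by
        rw [Finset.filter_eq_empty_iff]
        rintro w - ⟨haw, hcw⟩
        rw [if_pos hu] at hcw
        by_cases hwN : w ∈ N
        · exact hNind u hu w hwN haw
        · rw [if_neg hwN] at hcw; exact absurd hcw (by decide)
      rw [this]; simp
    · refine le_trans (Finset.card_le_card ?_) (hRdeg u hu)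
      intro w hw
      rw [Finset.mem_filter] at hw
      obtain ⟨-, haw, hcw⟩ := hw
      dsimp only at hcw
      have huN : u ∉ N := fun h => (((hRmem u).mp hu).2 ((hNmem u).mp h))
      rw [if_neg huN] at hcw
      have hwN : w ∉ N := by
        intro h; rw [if_pos h] at hcw; exact absurd hcw (by decide)
      have hwv : w ≠ v := by
        rintro rfl
        exact (((hRmem u).mp hu).2 haw.symm)
      refine Finset.mem_inter.mpr ⟨(hRmem w).mpr ⟨hwv, fun h => hwN ((hNmem w).mpr h)⟩, ?_⟩
      simp [haw]
  · -- Case (b)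
    push_neg at hRdeg
    obtain ⟨u, huR, hu2⟩ := hRdeg
    obtain ⟨a, ha, b, hb, hab⟩ := Finset.one_lt_card.mp hu2
    rw [Finset.mem_inter] at ha hb
    have haR : a ∈ R := ha.1
    have hbR : b ∈ R := hb.1
    have hua : G.Adj u a := by have := ha.2; simpa using this
    have hub : G.Adj u b := by have := hb.2; simpa using this
    have hnab : ¬ G.Adj a b := fun h => noTri' hG u a b hua hub h
    have huv : u ≠ v := ((hRmem u).mp huR).1
    have hav : a ≠ v := ((hRmem a).mp haR).1
    have hbv : b ≠ v := ((hRmem b).mp hbR).1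
    have hnva : ¬ G.Adj v a := ((hRmem a).mp haR).2
    have hnvb : ¬ G.Adj v b := ((hRmem b).mp hbR).2
    have hnvu : ¬ G.Adj v u := ((hRmem u).mp huR).2
    have hau : u ≠ a := fun h => G.loopless.irrefl u (h ▸ hua)
    have hbu : u ≠ b := fun h => G.loopless.irrefl u (h ▸ hub)
    have haN : a ∉ N := fun h => hnva ((hNmem a).mp h)
    have hbN : b ∉ N := fun h => hnvb ((hNmem b).mp h)
    have huN : u ∉ N := fun h => hnvu ((hNmem u).mp h)
    have hsub : ({u, a, b} : Finset V) ⊆ R := by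
      intro x hx
      simp only [Finset.mem_insert, Finset.mem_singleton] at hx
      rcases hx with rfl | rfl | rfl <;> assumption
    have hcard3 : ({u, a, b} : Finset V).card = 3 :=
      Finset.card_eq_three.mpr ⟨u, a, b, hau, hbu, hab, rfl⟩
    have hR3 : R.card ≤ 3 := by
      have := hcards; omega
    have hReq : R = ({u, a, b} : Finset V) :=
      (Finset.eq_of_subset_of_card_le hsub (by omega)).symm
    have hRcard : R.card = 3 := by rw [hReq]; exact hcard3
    have hNc4 : N.card = 4 := by
      have h8 := hcard
      have := hcards
      omega
    -- u's neighbours in N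
    set T : Finset V := N ∩ Finset.univ.filter (G.Adj u ·) with hT
    have hTmem : ∀ x, x ∈ T ↔ (x ∈ N ∧ G.Adj u x) := by intro x; simp [hT]
    have hT2 : T.card ≤ 2 := by
      have hsub2 : insert a (insert b T) ⊆ Finset.univ.filter (G.Adj u ·) := by
        intro x hx
        simp only [Finset.mem_insert] at hx
        rcases hx with rfl | rfl | hx
        · simp [hua]
        · simp [hub]
        · simp [((hTmem x).mp hx).2]
      have haT : a ∉ insert b T := by
        simp only [Finset.mem_insert]
        rintro (rfl | h)
        · exact hab rfl
        · exact haN ((hTmem a).mp h).1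
      have hbT : b ∉ T := fun h => hbN ((hTmem b).mp h).1
      have hc1 : (insert a (insert b T)).card = T.card + 2 := by
        rw [Finset.card_insert_of_notMem haT, Finset.card_insert_of_notMem hbT]
      have := Finset.card_le_card hsub2
      have := hmax u
      omega
    by_cases hT1 : T.card ≤ 1
    · -- Case (b1): classes N ∪ {u} and {v, a, b}
      refine ⟨fun w => if w = u ∨ w ∈ N then 1 else 0, fun w => ?_⟩
      rcases hcover w with hw | hw | hw
      · -- w = v
        rw [hw]
        have : (Finset.univ.filter fun y => G.Adj v y ∧
            (if y = u ∨ y ∈ N then (1:Fin 2) else 0) = (if v = u ∨ v ∈ N then 1 else 0)) = ∅ := by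
          rw [Finset.filter_eq_empty_iff]
          rintro y - ⟨hay, hcy⟩
          rw [if_pos (Or.inr ((hNmem y).mpr hay)),
            if_neg (by push_neg; exact ⟨huv.symm, hvN⟩)] at hcy
          exact absurd hcy (by decide)
        rw [this]; simp
      · -- w ∈ N
        refine le_trans (Finset.card_le_card (t := {u}) ?_) (by simp)
        intro y hy
        rw [Finset.mem_filter] at hy
        obtain ⟨-, hay, hcy⟩ := hy
        dsimp only at hcy
        rw [if_pos (Or.inr hw)] at hcy
        have hmem : y = u ∨ y ∈ N := by
          by_contra hcon
          rw [if_neg hcon] at hcy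
          exact absurd hcy (by decide)
        rcases hmem with h1 | hyN
        · simp [h1]
        · exact absurd hay (hNind w hw y hyN)
      · -- w ∈ R = {u, a, b}
        rw [hReq] at hw
        simp only [Finset.mem_insert, Finset.mem_singleton] at hw
        rcases hw with hw | hw | hw
        all_goals rw [hw]
        · -- w = u : neighbours in class ⊆ T
          refine le_trans (Finset.card_le_card (t := T) ?_) hT1
          intro y hy
          rw [Finset.mem_filter] at hy
          obtain ⟨-, hay, hcy⟩ := hy
          dsimp only at hcy
          rw [if_pos (Or.inl rfl)] at hcy
          have hmem : y = u ∨ y ∈ N := by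
            by_contra hcon
            rw [if_neg hcon] at hcy
            exact absurd hcy (by decide)
          rcases hmem with h1 | hyN
          · rw [h1] at hay; exact absurd hay (G.loopless.irrefl u)
          · exact (hTmem y).mpr ⟨hyN, hay⟩
        · -- w = a
          have : (Finset.univ.filter fun y => G.Adj a y ∧
              (if y = u ∨ y ∈ N then (1:Fin 2) else 0) = (if a = u ∨ a ∈ N then 1 else 0)) = ∅ := by
            rw [Finset.filter_eq_empty_iff]
            rintro y - ⟨hay, hcy⟩
            rw [if_neg (show ¬(a = u ∨ a ∈ N) by push_neg; exact ⟨fun h => hau h.symm, haN⟩)] at hcy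
            have hycon : ¬ (y = u ∨ y ∈ N) := by
              intro h; rw [if_pos h] at hcy; exact absurd hcy (by decide)
            push_neg at hycon
            rcases hcover y with h1 | hyN | hyR
            · rw [h1] at hay; exact hnva hay.symm
            · exact hycon.2 hyN
            · rw [hReq] at hyR
              simp only [Finset.mem_insert, Finset.mem_singleton] at hyR
              rcases hyR with h2 | h2 | h2 <;> rw [h2] at hay
              · exact hycon.1 (by rw [← h2, h2])
              · exact G.loopless.irrefl a hay
              · exact hnab hay
          rw [this]; simp
        · -- w = b
          have : (Finset.univ.filter fun y => G.Adj b y ∧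
              (if y = u ∨ y ∈ N then (1:Fin 2) else 0) = (if b = u ∨ b ∈ N then 1 else 0)) = ∅ := by
            rw [Finset.filter_eq_empty_iff]
            rintro y - ⟨hay, hcy⟩
            rw [if_neg (show ¬(b = u ∨ b ∈ N) by push_neg; exact ⟨fun h => hbu h.symm, hbN⟩)] at hcy
            have hycon : ¬ (y = u ∨ y ∈ N) := by
              intro h; rw [if_pos h] at hcy; exact absurd hcy (by decide)
            push_neg at hycon
            rcases hcover y with h1 | hyN | hyR
            · rw [h1] at hay; exact hnvb hay.symm
            · exact hycon.2 hyN
            · rw [hReq] at hyR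
              simp only [Finset.mem_insert, Finset.mem_singleton] at hyR
              rcases hyR with h2 | h2 | h2 <;> rw [h2] at hay
              · exact hycon.1 (by rw [← h2, h2])
              · exact hnab hay.symm
              · exact G.loopless.irrefl b hay
          rw [this]; simp
    · -- Case (b2): T.card = 2, pick x ∈ T; classes (N \ {x}) ∪ {u} and {v, x, a, b}
      have hT2' : T.card = 2 := by omega
      obtain ⟨x, hxT⟩ := Finset.card_pos.mp (by omega : 0 < T.card)
      have hxN : x ∈ N := ((hTmem x).mp hxT).1
      have hux : G.Adj u x := ((hTmem x).mp hxT).2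
      have hxa : ¬ G.Adj x a := fun h => noTri' hG u x a hux hua h
      have hxb : ¬ G.Adj x b := fun h => noTri' hG u x b hux hub h
      have hxu : x ≠ u := fun h => G.loopless.irrefl u (h ▸ hux)
      refine ⟨fun w => if w = u ∨ (w ∈ N ∧ w ≠ x) then 1 else 0, fun w => ?_⟩
      by_cases hwx : w = x
      · -- w = x : neighbours in class ⊆ {v}
        rw [hwx]
        refine le_trans (Finset.card_le_card (t := {v}) ?_) (by simp)
        intro y hy
        rw [Finset.mem_filter] at hy
        obtain ⟨-, hay, hcy⟩ := hy
        dsimp only at hcy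
        rw [if_neg (show ¬(x = u ∨ (x ∈ N ∧ x ≠ x)) by push_neg; exact ⟨hxu, fun _ => rfl⟩)] at hcy
        have hycon : ¬ (y = u ∨ (y ∈ N ∧ y ≠ x)) := by
          intro h; rw [if_pos h] at hcy; exact absurd hcy (by decide)
        push_neg at hycon
        rcases hcover y with h1 | hyN | hyR
        · simp [h1]
        · have h2 := hycon.2 hyN
          rw [h2] at hay
          exact absurd hay (G.loopless.irrefl x)
        · rw [hReq] at hyR
          simp only [Finset.mem_insert, Finset.mem_singleton] at hyR
          rcases hyR with h2 | h2 | h2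
          · exact absurd h2 hycon.1
          · rw [h2] at hay; exact absurd hay hxa
          · rw [h2] at hay; exact absurd hay hxb
      rcases hcover w with hw | hw | hw
      · -- w = v : neighbours in class ⊆ {x}
        rw [hw]
        refine le_trans (Finset.card_le_card (t := {x}) ?_) (by simp)
        intro y hy
        rw [Finset.mem_filter] at hy
        obtain ⟨-, hay, hcy⟩ := hy
        dsimp only at hcy
        rw [if_neg (show ¬(v = u ∨ (v ∈ N ∧ v ≠ x)) by push_neg; exact ⟨huv.symm, fun h => absurd h hvN⟩)] at hcy
        have hycon : ¬ (y = u ∨ (y ∈ N ∧ y ≠ x)) := by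
          intro h; rw [if_pos h] at hcy; exact absurd hcy (by decide)
        push_neg at hycon
        have hyN : y ∈ N := (hNmem y).mpr hay
        simp [hycon.2 hyN]
      · -- w ∈ N (and w ≠ x) : neighbours in class ⊆ {u}
        refine le_trans (Finset.card_le_card (t := {u}) ?_) (by simp)
        intro y hy
        rw [Finset.mem_filter] at hy
        obtain ⟨-, hay, hcy⟩ := hy
        dsimp only at hcy
        rw [if_pos (show (w = u ∨ (w ∈ N ∧ w ≠ x)) from Or.inr ⟨hw, hwx⟩)] at hcy
        have hmem : y = u ∨ (y ∈ N ∧ y ≠ x) := by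
          by_contra hcon
          rw [if_neg hcon] at hcy
          exact absurd hcy (by decide)
        rcases hmem with h1 | ⟨hyN, -⟩
        · simp [h1]
        · exact absurd hay (hNind w hw y hyN)
      · -- w ∈ R = {u, a, b}
        rw [hReq] at hw
        simp only [Finset.mem_insert, Finset.mem_singleton] at hw
        rcases hw with hw | hw | hw
        all_goals rw [hw]
        · -- w = u : neighbours in class ⊆ T.erase x
          refine le_trans (Finset.card_le_card (t := T.erase x) ?_) ?_
          · intro y hy
            rw [Finset.mem_filter] at hy
            obtain ⟨-, hay, hcy⟩ := hy
            dsimp only at hcy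
            rw [if_pos (Or.inl rfl)] at hcy
            have hmem : y = u ∨ (y ∈ N ∧ y ≠ x) := by
              by_contra hcon
              rw [if_neg hcon] at hcy
              exact absurd hcy (by decide)
            rcases hmem with h1 | ⟨hyN, hyx⟩
            · rw [h1] at hay; exact absurd hay (G.loopless.irrefl u)
            · exact Finset.mem_erase.mpr ⟨hyx, (hTmem y).mpr ⟨hyN, hay⟩⟩
          · rw [Finset.card_erase_of_mem hxT, hT2']
        · -- w = a : empty class-neighbourhood
          have : (Finset.univ.filter fun y => G.Adj a y ∧
              (if y = u ∨ (y ∈ N ∧ y ≠ x) then (1:Fin 2) else 0)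
                = (if a = u ∨ (a ∈ N ∧ a ≠ x) then 1 else 0)) = ∅ := by
            rw [Finset.filter_eq_empty_iff]
            rintro y - ⟨hay, hcy⟩
            rw [if_neg (show ¬(a = u ∨ (a ∈ N ∧ a ≠ x)) by push_neg; exact ⟨fun h => hau h.symm, fun h => absurd h haN⟩)] at hcy
            have hycon : ¬ (y = u ∨ (y ∈ N ∧ y ≠ x)) := by
              intro h; rw [if_pos h] at hcy; exact absurd hcy (by decide)
            push_neg at hycon
            rcases hcover y with h1 | hyN | hyR
            · rw [h1] at hay; exact hnva hay.symm
            · have h2 := hycon.2 hyN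
              rw [h2] at hay
              exact hxa hay.symm
            · rw [hReq] at hyR
              simp only [Finset.mem_insert, Finset.mem_singleton] at hyR
              rcases hyR with h2 | h2 | h2
              · exact hycon.1 h2
              · rw [h2] at hay; exact G.loopless.irrefl a hay
              · rw [h2] at hay; exact hnab hay
          rw [this]; simp
        · -- w = b : empty class-neighbourhood
          have : (Finset.univ.filter fun y => G.Adj b y ∧
              (if y = u ∨ (y ∈ N ∧ y ≠ x) then (1:Fin 2) else 0)
                = (if b = u ∨ (b ∈ N ∧ b ≠ x) then 1 else 0)) = ∅ := by
            rw [Finset.filter_eq_empty_iff]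
            rintro y - ⟨hay, hcy⟩
            rw [if_neg (show ¬(b = u ∨ (b ∈ N ∧ b ≠ x)) by push_neg; exact ⟨fun h => hbu h.symm, fun h => absurd h hbN⟩)] at hcy
            have hycon : ¬ (y = u ∨ (y ∈ N ∧ y ≠ x)) := by
              intro h; rw [if_pos h] at hcy; exact absurd hcy (by decide)
            push_neg at hycon
            rcases hcover y with h1 | hyN | hyR
            · rw [h1] at hay; exact hnvb hay.symm
            · have h2 := hycon.2 hyN
              rw [h2] at hay
              exact hxb hay.symm
            · rw [hReq] at hyR
              simp only [Finset.mem_insert, Finset.mem_singleton] at hyR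
              rcases hyR with h2 | h2 | h2
              · exact hycon.1 h2
              · rw [h2] at hay; exact hnab hay.symm
              · rw [h2] at hay; exact G.loopless.irrefl b hay
          rw [this]; simp

end Aux

section Example9

def nbrs9 : Fin 9 → List (Fin 9)
  | 0 => [1,3,8]
  | 1 => [0,4,5,6]
  | 2 => [3,5,6]
  | 3 => [0,2,4,7]
  | 4 => [1,3,8]
  | 5 => [1,2,7,8]
  | 6 => [1,2,7,8]
  | 7 => [3,5,6]
  | 8 => [0,4,5,6]

def G9 : SimpleGraph (Fin 9) where
  Adj i j := j ∈ nbrs9 i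
  symm := ⟨fun i j h => (by decide : ∀ i j : Fin 9, j ∈ nbrs9 i → i ∈ nbrs9 j) i j h⟩
  loopless := ⟨fun i h => (by decide : ∀ i : Fin 9, ¬ i ∈ nbrs9 i) i h⟩

instance : DecidableRel G9.Adj := fun i j => inferInstanceAs (Decidable (j ∈ nbrs9 i))

lemma G9_cliqueFree : G9.CliqueFree 3 := by
  have h : ∀ t : Finset (Fin 9), ¬ G9.IsNClique 3 t := by decide
  exact h

lemma G9_not2 : ¬ ∃ c : Fin 9 → Fin 2,
    ∀ v, (Finset.univ.filter fun w => G9.Adj v w ∧ c w = c v).card ≤ 1 := by decide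

lemma G9_col3 : ∀ v, (Finset.univ.filter fun w => G9.Adj v w ∧
    (![0,0,0,1,1,1,1,0,2] : Fin 9 → Fin 3) w = ![0,0,0,1,1,1,1,0,2] v).card ≤ 1 := by decide

end Example9

/-- f(3,1) = 9: every triangle-free graph on at most 8 vertices has 1-defective
chromatic number at most 2, and there is a triangle-free graph on 9 vertices with
1-defective chromatic number 3. -/
theorem stmt8 :
    (∀ (V : Type) [Fintype V] (G : SimpleGraph V),
        Fintype.card V ≤ 8 → G.CliqueFree 3 → defChrom G 1 ≤ 2) ∧
    (∃ G : SimpleGraph (Fin 9), G.CliqueFree 3 ∧ defChrom G 1 = 3) := by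
  constructor
  · intro V _ G hcard hG
    classical
    have hcol : DefColorable G 2 1 := by
      by_cases hdeg : ∀ v : V, (Finset.univ.filter (G.Adj v ·)).card ≤ 3
      · obtain ⟨c, hc⟩ := lovasz hdeg
        exact defcol_of_part c hc
      · push_neg at hdeg
        obtain ⟨v0, hv0⟩ := hdeg
        obtain ⟨v, -, hv⟩ := Finset.exists_max_image (Finset.univ : Finset V)
          (fun u => (Finset.univ.filter (G.Adj u ·)).card) ⟨v0, Finset.mem_univ v0⟩
        have hmax : ∀ u : V, (Finset.univ.filter (G.Adj u ·)).card ≤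
            (Finset.univ.filter (G.Adj v ·)).card := fun u => hv u (Finset.mem_univ u)
        have h4 : 4 ≤ (Finset.univ.filter (G.Adj v ·)).card :=
          le_trans (by omega) (hmax v0)
        obtain ⟨c, hc⟩ := highdegAux hcard hG v hmax h4
        exact defcol_of_part c hc
    exact Nat.sInf_le hcol
  · refine ⟨G9, G9_cliqueFree, ?_⟩
    have h3 : DefColorable G9 3 1 := defcol_of_part _ G9_col3
    have h2 : ¬ DefColorable G9 2 1 := fun h => G9_not2 (part_of_defcol h)
    refine le_antisymm (Nat.sInf_le h3) ?_
    refine le_csInf ⟨3, h3⟩ (fun b hb => ?_)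
    by_contra hlt
    push_neg at hlt
    exact h2 (defColorable_mono hb (by omega))
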